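/- Let n ≥ 1 and let L be a positive integer with 2n | L. Then the half-shifted correlation matrix for f(z) = z^n + 1 satisfies the selection rule G^{(z^n+1)}(L)_{ij} = 0 for all i,j ∈ {1,…,L} with n ∤ (i − j). -/

import Mathlib

open scoped BigOperators Matrix

noncomputable def theta (L : ℕ) (k : Fin L) : ℝ :=
  2 * Real.pi / L * ((k : ℝ) + 1 / 2)

noncomputable def Gf (L : ℕ) (f : ℂ → ℂ) : Matrix (Fin L) (Fin L) ℂ :=
  Matrix.of fun n m : Fin L =>
    (-1 : ℂ) ^ ((n : ℤ) - (m : ℤ)) / (L : ℂ) *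
      ∑ k : Fin L,
        f (Complex.exp (Complex.I * (theta L k : ℂ))) /
            ((‖f (Complex.exp (Complex.I * (theta L k : ℂ)))‖ : ℝ) : ℂ) *
          Complex.exp (Complex.I * (theta L k : ℂ) * (((n : ℤ) - (m : ℤ) : ℤ) : ℂ))

noncomputable def eAux (L : ℕ) (t : ℤ) : ℂ :=
  Complex.exp (Complex.I * (2 * Real.pi / (L : ℂ)) * ((t : ℂ) + 1 / 2))

noncomputable def hAux (L n : ℕ) (d t : ℤ) : ℂ :=
  ((eAux L t) ^ n + 1) / ((‖(eAux L t) ^ n + 1‖ : ℝ) : ℂ) * (eAux L t) ^ d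

lemma eAux_congr (L : ℕ) (hL : 0 < L) {s t : ℤ} (hst : (L : ℤ) ∣ (s - t)) :
    eAux L s = eAux L t := by
  obtain ⟨c, hc⟩ := hst
  have hL0 : (L : ℂ) ≠ 0 := Nat.cast_ne_zero.mpr hL.ne'
  have hs : (s : ℂ) = (t : ℂ) + (c : ℂ) * (L : ℂ) := by
    have : s = t + c * L := by linarith [hc]
    exact_mod_cast congrArg (Int.cast : ℤ → ℂ) this
  unfold eAux
  rw [show Complex.I * (2 * Real.pi / (L:ℂ)) * ((s:ℂ) + 1/2)
      = Complex.I * (2 * Real.pi / (L:ℂ)) * ((t:ℂ) + 1/2) + (c:ℂ) * (2 * Real.pi * Complex.I) from by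
    rw [hs]; field_simp; ring]
  rw [Complex.exp_add, Complex.exp_int_mul_two_pi_mul_I, mul_one]

theorem selection_rule_zn_plus_one (n L : ℕ) (hn : 1 ≤ n) (hL : 0 < L)
    (hdvd : 2 * n ∣ L) :
    ∀ i j : Fin L, ¬ ((n : ℤ) ∣ ((i : ℤ) - (j : ℤ))) →
      Gf L (fun z => z ^ n + 1) i j = 0 := by
  intro i j hnd
  haveI : NeZero L := ⟨hL.ne'⟩
  have hnL : n ∣ L := (dvd_mul_left n 2).trans hdvd
  obtain ⟨m, hm⟩ := hnL
  have hn0 : (n : ℂ) ≠ 0 := Nat.cast_ne_zero.mpr (by omega)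
  have hL0 : (L : ℂ) ≠ 0 := Nat.cast_ne_zero.mpr hL.ne'
  set d : ℤ := (i : ℤ) - (j : ℤ) with hd
  set w : ℂ := Complex.exp (2 * Real.pi * Complex.I / n) with hw
  have hmn : (n : ℂ) * (m : ℂ) = (L : ℂ) := by exact_mod_cast hm.symm
  -- shift of eAux
  have e_shift : ∀ t : ℤ, eAux L (t + m) = eAux L t * w := by
    intro t
    unfold eAux
    rw [hw, ← Complex.exp_add]
    congr 1
    push_cast
    field_simp
    ring_nf
    linear_combination 2 * hmn
  have hwn : w ^ n = 1 := by
    rw [hw, ← Complex.exp_nat_mul,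
      show (n : ℂ) * (2 * Real.pi * Complex.I / n) = 2 * Real.pi * Complex.I from by
        field_simp]
    exact Complex.exp_two_pi_mul_I
  have h_shift : ∀ t : ℤ, hAux L n d (t + m) = w ^ d * hAux L n d t := by
    intro t
    unfold hAux
    rw [e_shift t, mul_pow, hwn, mul_one, mul_zpow]
    ring
  have h_congr : ∀ s t : ℤ, (L : ℤ) ∣ (s - t) → hAux L n d s = hAux L n d t := by
    intro s t hst
    unfold hAux
    rw [eAux_congr L hL hst]
  have hprim : IsPrimitiveRoot w n := Complex.isPrimitiveRoot_exp n (by omega)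
  have hwd : w ^ d ≠ 1 := fun hcontra => hnd ((hprim.zpow_eq_one_iff_dvd d).mp hcontra)
  set S : ℂ := ∑ k : Fin L, hAux L n d ((k : ℕ) : ℤ) with hS
  set mf : Fin L := ⟨m % L, Nat.mod_lt _ hL⟩ with hmf
  have hsum : ∑ k : Fin L, hAux L n d (((k + mf : Fin L) : ℕ) : ℤ) = S :=
    Equiv.sum_comp (Equiv.addRight mf) (fun x : Fin L => hAux L n d ((x : ℕ) : ℤ))
  have hterm : ∀ k : Fin L, hAux L n d (((k + mf : Fin L) : ℕ) : ℤ)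
      = w ^ d * hAux L n d ((k : ℕ) : ℤ) := by
    intro k
    have h1 : hAux L n d (((k + mf : Fin L) : ℕ) : ℤ) = hAux L n d ((k : ℕ) + (m : ℤ)) := by
      apply h_congr
      have hv : ((k + mf : Fin L) : ℕ) = ((k : ℕ) + m % L) % L := by
        rw [Fin.add_def]
      rw [hv]
      have hmod : ((k : ℕ) + m % L) % L ≡ (k : ℕ) + m [MOD L] :=
        (Nat.mod_modEq _ L).trans (Nat.ModEq.add_left _ (Nat.mod_modEq m L))
      have hdd := hmod.dvd
      push_cast at hdd ⊢
      exact dvd_sub_comm.mp hdd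
    rw [h1, h_shift]
  have key : S = w ^ d * S := by
    calc S = ∑ k : Fin L, hAux L n d (((k + mf : Fin L) : ℕ) : ℤ) := hsum.symm
      _ = ∑ k : Fin L, w ^ d * hAux L n d ((k : ℕ) : ℤ) :=
          Finset.sum_congr rfl fun k _ => hterm k
      _ = w ^ d * S := by rw [← Finset.mul_sum]
  have hS0 : S = 0 := by
    by_contra hS0
    have h1 : (1 : ℂ) * S = w ^ d * S := by rw [one_mul]; exact key
    exact hwd ((mul_right_cancel₀ hS0 h1).symm)
  -- now finish
  have hsum_eq : (∑ k : Fin L,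
      ((Complex.exp (Complex.I * (theta L k : ℂ))) ^ n + 1) /
          ((‖(Complex.exp (Complex.I * (theta L k : ℂ))) ^ n + 1‖ : ℝ) : ℂ) *
        Complex.exp (Complex.I * (theta L k : ℂ) * ((d : ℤ) : ℂ))) = S := by
    apply Finset.sum_congr rfl
    intro k _
    have h1 : Complex.exp (Complex.I * (theta L k : ℂ)) = eAux L ((k : ℕ) : ℤ) := by
      unfold eAux theta
      congr 1
      push_cast
      ring
    have h2 : Complex.exp (Complex.I * (theta L k : ℂ) * ((d : ℤ) : ℂ))
        = (eAux L ((k : ℕ) : ℤ)) ^ d := by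
      rw [show Complex.I * (theta L k : ℂ) * ((d : ℤ) : ℂ)
          = ((d : ℤ) : ℂ) * (Complex.I * (theta L k : ℂ)) from by ring,
        Complex.exp_int_mul, h1]
    rw [h1, h2]
    rfl
  show Gf L (fun z => z ^ n + 1) i j = 0
  rw [Gf]
  simp only [Matrix.of_apply, ← hd]
  rw [hsum_eq, hS0, mul_zero]
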